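/- Let G be a graph with maximum vertex degree d and unit edge capacities, let S, T be disjoint vertex subsets, and suppose there is an S–T flow of value κ that causes edge-congestion at most η ≥ 1. Then G contains a collection of at least ⌈κ/(dη)⌉ vertex-disjoint paths, each with one endpoint in S and the other in T. -/

import Mathlib

attribute [local instance] Classical.propDecidable

set_option maxHeartbeats 1000000

noncomputable section

variable {V : Type}

/-- The degree of a vertex `v` in the simple graph `G`. -/
def deg [Fintype V] (G : SimpleGraph V) (v : V) : ℕ :=
  (Finset.univ.filter (fun u => G.Adj v u)).card

/-- The boundary `Γ(C)` of a cluster `C`: the vertices of `C` having a neighbor outside `C`. -/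
def bdry (G : SimpleGraph V) (C : Finset V) : Finset V :=
  C.filter (fun v => ∃ u, u ∉ C ∧ G.Adj v u)

/-- The number of edges `|E(A,B)|` with one endpoint in `A` and the other in `B`
(for disjoint `A`, `B`). -/
def cutCard (G : SimpleGraph V) (A B : Finset V) : ℕ :=
  ((A ×ˢ B).filter (fun ab => G.Adj ab.1 ab.2)).card

/-- A flow in `G[C]` from `A` to `B`, in which every vertex of `A` sends exactly one
unit of flow, every vertex of `B` receives exactly one unit of flow, and the total
flow through any edge is at most `η`. -/
def HasUnitFlowIn (G : SimpleGraph V) (C A B : Finset V) (η : ℝ) : Prop :=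
  ∃ (P : Finset (Σ u v : V, G.Walk u v)) (f : (Σ u v : V, G.Walk u v) → ℝ),
    (∀ p ∈ P, 0 ≤ f p) ∧
    (∀ p ∈ P, p.1 ∈ A ∧ p.2.1 ∈ B) ∧
    (∀ p ∈ P, ∀ x ∈ p.2.2.support, x ∈ C) ∧
    (∀ a ∈ A, ∑ p ∈ P.filter (fun p => p.1 = a), f p = 1) ∧
    (∀ b ∈ B, ∑ p ∈ P.filter (fun p => p.2.1 = b), f p = 1) ∧
    (∀ e : Sym2 V, ∑ p ∈ P.filter (fun p => e ∈ p.2.2.edges), f p ≤ η)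

/-- `T` is `α`-well-linked in `G[C]`: every pair of disjoint equal-sized subsets of `T`
can be connected, one-to-one, by a flow of edge-congestion at most `1/α` inside `C`. -/
def WellLinkedIn (G : SimpleGraph V) (C T : Finset V) (α : ℝ) : Prop :=
  ∀ T' T'' : Finset V, T' ⊆ T → T'' ⊆ T → Disjoint T' T'' → T'.card = T''.card →
    HasUnitFlowIn G C T' T'' (1 / α)

/-- `T` is `(k',α)`-well-linked in `G[C]`. -/
def WellLinkedKIn (G : SimpleGraph V) (C T : Finset V) (k' : ℕ) (α : ℝ) : Prop :=
  ∀ T' T'' : Finset V, T' ⊆ T → T'' ⊆ T → Disjoint T' T'' → T'.card = T''.card →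
    T'.card ≤ k' → HasUnitFlowIn G C T' T'' (1 / α)

/-- `T` is `α`-well-linked in `G`. -/
def WellLinked [Fintype V] (G : SimpleGraph V) (T : Finset V) (α : ℝ) : Prop :=
  WellLinkedIn G Finset.univ T α

/-- There is a family of pairwise vertex-disjoint paths in `G`, one starting at each
vertex of `A`, each ending at a (necessarily distinct) vertex of `B`. -/
def NodeLinkedSets (G : SimpleGraph V) (A B : Finset V) : Prop :=
  ∃ P : Finset (Σ u v : V, G.Walk u v),
    (∀ p ∈ P, p.2.2.IsPath ∧ p.1 ∈ A ∧ p.2.1 ∈ B) ∧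
    (∀ a ∈ A, ∃ p ∈ P, p.1 = a) ∧
    (∀ p ∈ P, ∀ q ∈ P, p ≠ q → ∀ x ∈ p.2.2.support, x ∉ q.2.2.support)

/-- `T` is node-well-linked in `G`. -/
def NodeWellLinked (G : SimpleGraph V) (T : Finset V) : Prop :=
  ∀ T' T'' : Finset V, T' ⊆ T → T'' ⊆ T → Disjoint T' T'' → T'.card = T''.card →
    NodeLinkedSets G T' T''

/-- `(T₁, T₂)` are node-linked in `G`. -/
def NodeLinked (G : SimpleGraph V) (T₁ T₂ : Finset V) : Prop :=
  ∀ T' T'' : Finset V, T' ⊆ T₁ → T'' ⊆ T₂ → T'.card = T''.card → NodeLinkedSets G T' T''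

/-- `(A,B)` is a `ρ`-balanced cut of the cluster `C` with respect to the vertex set `Γ`. -/
def IsBalancedCut (Γ A B C : Finset V) (ρ : ℝ) : Prop :=
  A ∪ B = C ∧ Disjoint A B ∧
    ρ * (Γ.card : ℝ) ≤ ((A ∩ Γ).card : ℝ) ∧ ρ * (Γ.card : ℝ) ≤ ((B ∩ Γ).card : ℝ)

section MengerProof

open SimpleGraph Finset

/-- `X` separates `A` from `B` in `G`: every `A`–`B` walk meets `X`. -/
def MSep (G : SimpleGraph V) (A B X : Finset V) : Prop :=
  ∀ ⦃a b : V⦄ (w : G.Walk a b), a ∈ A → b ∈ B → ∃ x ∈ X, x ∈ w.support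

/-- There are `k` pairwise vertex-disjoint `A`–`B` walks in `G`. -/
def DisjWalks (G : SimpleGraph V) (A B : Finset V) (k : ℕ) : Prop :=
  ∃ Q : Finset (Σ u v : V, G.Walk u v),
    k ≤ Q.card ∧ (∀ q ∈ Q, q.1 ∈ A ∧ q.2.1 ∈ B) ∧
    (∀ q ∈ Q, ∀ r ∈ Q, q ≠ r → ∀ x ∈ q.2.2.support, x ∉ r.2.2.support)

lemma walk_eq_of_no_edges {G : SimpleGraph V} (hE : G.edgeSet = ∅) {a b : V}
    (w : G.Walk a b) : a = b := by
  cases w with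
  | nil => rfl
  | cons h p => exact absurd (G.mem_edgeSet.2 h) (by simp [hE])

/-- first-hit truncation of a walk at a vertex set `X`. -/
lemma exists_firstHit {G : SimpleGraph V} {X : Finset V} :
    ∀ {a b : V} (w : G.Walk a b), (∃ x ∈ X, x ∈ w.support) →
    ∃ (v : V) (w' : G.Walk a v), v ∈ X ∧
      (∀ u ∈ w'.support, u ∈ X → u = v) ∧ w'.support.count v = 1 ∧
      (∀ u ∈ w'.support, u ∈ w.support) ∧ (∀ e ∈ w'.edges, e ∈ w.edges) := by
  intro a b w
  induction w with
  | nil =>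
    rintro ⟨x, hxX, hxs⟩
    rw [SimpleGraph.Walk.mem_support_nil_iff] at hxs
    subst hxs
    exact ⟨x, SimpleGraph.Walk.nil, hxX, by simp +contextual, by simp, by simp, by simp⟩
  | @cons a c b hadj rest ih =>
    rintro ⟨x, hxX, hxs⟩
    by_cases haX : a ∈ X
    · exact ⟨a, SimpleGraph.Walk.nil, haX, by simp +contextual, by simp, by simp, by simp⟩
    · have hxr : x ∈ rest.support := by
        rw [SimpleGraph.Walk.support_cons] at hxs
        rcases List.mem_cons.1 hxs with h | h
        · exact absurd hxX (h ▸ haX)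
        · exact h
      obtain ⟨v, w', hvX, honly, hcount, hsub, hesub⟩ := ih ⟨x, hxX, hxr⟩
      refine ⟨v, SimpleGraph.Walk.cons hadj w', hvX, ?_, ?_, ?_, ?_⟩
      · intro u hu huX
        rw [SimpleGraph.Walk.support_cons] at hu
        rcases List.mem_cons.1 hu with h | h
        · exact absurd huX (h ▸ haX)
        · exact honly u h huX
      · rw [SimpleGraph.Walk.support_cons, List.count_cons]
        have hav : ¬ (a = v) := fun h => haX (h ▸ hvX)
        simp [hcount, hav]
      · intro u hu
        rw [SimpleGraph.Walk.support_cons] at hu ⊢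
        rcases List.mem_cons.1 hu with h | h
        · simp [h]
        · exact List.mem_cons.2 (Or.inr (hsub u h))
      · intro e he
        rw [SimpleGraph.Walk.edges_cons] at *
        rcases List.mem_cons.1 he with h | h
        · exact List.mem_cons.2 (Or.inl h)
        · exact List.mem_cons.2 (Or.inr (hesub e h))

/-- last-hit version: a walk from `X` to `b` meeting `X` only at its start. -/
lemma exists_lastHit {G : SimpleGraph V} {X : Finset V} {a b : V} (w : G.Walk a b)
    (h : ∃ x ∈ X, x ∈ w.support) :
    ∃ (v : V) (w' : G.Walk v b), v ∈ X ∧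
      (∀ u ∈ w'.support, u ∈ X → u = v) ∧ w'.support.count v = 1 ∧
      (∀ u ∈ w'.support, u ∈ w.support) ∧ (∀ e ∈ w'.edges, e ∈ w.edges) := by
  obtain ⟨v, w', hvX, honly, hcount, hsub, hesub⟩ :=
    exists_firstHit (X := X) w.reverse (by
      obtain ⟨x, h1, h2⟩ := h
      exact ⟨x, h1, by simpa [SimpleGraph.Walk.support_reverse] using h2⟩)
  refine ⟨v, w'.reverse, hvX, ?_, ?_, ?_, ?_⟩
  · intro u hu; exact honly u (by simpa [SimpleGraph.Walk.support_reverse] using hu)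
  · simpa [SimpleGraph.Walk.support_reverse] using hcount
  · intro u hu
    have := hsub u (by simpa [SimpleGraph.Walk.support_reverse] using hu)
    simpa [SimpleGraph.Walk.support_reverse] using this
  · intro e he
    have := hesub e (by simpa [SimpleGraph.Walk.edges_reverse] using he)
    simpa [SimpleGraph.Walk.edges_reverse] using this


/-- the crux disjointness argument -/
lemma crux {G G'' : SimpleGraph V} (hle : G'' ≤ G) {A B X : Finset V}
    (hSep : ∀ ⦃a b : V⦄ (w : G.Walk a b), a ∈ A → b ∈ B → ∃ x ∈ X, x ∈ w.support)
    {a b x₁ x₂ : V} (ha : a ∈ A) (hb : b ∈ B) (hx₁ : x₁ ∈ X) (hx₂ : x₂ ∈ X)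
    (hne : x₁ ≠ x₂)
    (P : G''.Walk a x₁) (Q : G''.Walk x₂ b)
    (honlyP : ∀ u ∈ P.support, u ∈ X → u = x₁) (hcP : P.support.count x₁ = 1)
    (honlyQ : ∀ u ∈ Q.support, u ∈ X → u = x₂) (hcQ : Q.support.count x₂ = 1) :
    ∀ w ∈ P.support, w ∉ Q.support := by
  intro w hwP hwQ
  have hwX : w ∉ X := fun hw => hne ((honlyP w hwP hw).symm.trans (honlyQ w hwQ hw))
  set W₀ : G''.Walk a b := (P.takeUntil w hwP).append (Q.dropUntil w hwQ) with hW₀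
  have hedges : ∀ e ∈ W₀.edges, e ∈ G.edgeSet := fun e he =>
    (SimpleGraph.edgeSet_mono hle) (W₀.edges_subset_edgeSet he)
  obtain ⟨z, hzX, hzW⟩ := hSep (W₀.transfer G hedges) ha hb
  rw [SimpleGraph.Walk.support_transfer] at hzW
  rw [hW₀, SimpleGraph.Walk.mem_support_append_iff] at hzW
  rcases hzW with hz | hz
  · -- z ∈ take-part of P, z = x₁, double occurrence of x₁ in P
    have hz1 : z = x₁ := honlyP z (P.support_takeUntil_subset hwP hz) hzX
    subst hz1
    have h1 : 0 < (P.takeUntil w hwP).support.count z :=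
      List.count_pos_iff.2 hz
    have h2 : z ∈ (P.dropUntil w hwP).support.tail := by
      have hmem : z ∈ (P.dropUntil w hwP).support := SimpleGraph.Walk.end_mem_support _
      rw [SimpleGraph.Walk.support_eq_cons] at hmem
      rcases List.mem_cons.1 hmem with h | h
      · exact absurd (h ▸ hzX) hwX
      · exact h
    have h2' : 0 < (P.dropUntil w hwP).support.tail.count z := List.count_pos_iff.2 h2
    have hdecomp : P.support
        = (P.takeUntil w hwP).support ++ (P.dropUntil w hwP).support.tail := by
      conv_lhs => rw [← P.take_spec hwP]
      rw [SimpleGraph.Walk.support_append]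
    rw [hdecomp, List.count_append] at hcP
    omega
  · -- z ∈ drop-part of Q, z = x₂, double occurrence of x₂ in Q
    have hz2 : z = x₂ := honlyQ z (Q.support_dropUntil_subset hwQ hz) hzX
    subst hz2
    have h1 : z ∈ (Q.takeUntil w hwQ).support := SimpleGraph.Walk.start_mem_support _
    have h1' : 0 < (Q.takeUntil w hwQ).support.count z := List.count_pos_iff.2 h1
    have h2 : z ∈ (Q.dropUntil w hwQ).support.tail := by
      have hmem := hz
      rw [SimpleGraph.Walk.support_eq_cons] at hmem
      rcases List.mem_cons.1 hmem with h | h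
      · exact absurd (h ▸ hzX) hwX
      · exact h
    have h2' : 0 < (Q.dropUntil w hwQ).support.tail.count z := List.count_pos_iff.2 h2
    have hdecomp : Q.support
        = (Q.takeUntil w hwQ).support ++ (Q.dropUntil w hwQ).support.tail := by
      conv_lhs => rw [← Q.take_spec hwQ]
      rw [SimpleGraph.Walk.support_append]
    rw [hdecomp, List.count_append] at hcQ
    omega

/-- the vertex identification map for contracting `y` into `x`. -/
def hmap (x y : V) : V → V := fun v => if v = y then x else v

/-- the contraction of the edge `xy` (on the same vertex set; `y` becomes isolated). -/
def GC (G : SimpleGraph V) (x y : V) : SimpleGraph V :=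
  SimpleGraph.fromRel (fun a b => ∃ a' b', G.Adj a' b' ∧ hmap x y a' = a ∧ hmap x y b' = b)

lemma hmap_eq_cases {x y u u' : V} (hxy : x ≠ y) (h : hmap x y u = hmap x y u')
    (hne : u ≠ u') : (u = x ∧ u' = y) ∨ (u = y ∧ u' = x) := by
  unfold hmap at h
  split_ifs at h with h1 h2 h2
  · exact absurd (h1.trans h2.symm) hne
  · exact Or.inr ⟨h1, h.symm⟩
  · exact Or.inl ⟨h, h2⟩
  · exact absurd h hne

lemma adj_of_hmap_eq {G : SimpleGraph V} {x y u u' : V} (hxy : G.Adj x y)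
    (h : hmap x y u = hmap x y u') (hne : u ≠ u') : G.Adj u u' := by
  rcases hmap_eq_cases hxy.ne h hne with ⟨h1, h2⟩ | ⟨h1, h2⟩
  · exact h1 ▸ h2 ▸ hxy
  · exact h1 ▸ h2 ▸ hxy.symm

lemma GC_adj {G : SimpleGraph V} {x y a b : V} (h : (GC G x y).Adj a b) :
    a ≠ b ∧ ∃ a' b', G.Adj a' b' ∧ hmap x y a' = a ∧ hmap x y b' = b := by
  rw [GC, SimpleGraph.fromRel_adj] at h
  refine ⟨h.1, ?_⟩
  rcases h.2 with ⟨a', b', hadj, h1, h2⟩ | ⟨b', a', hadj, h2, h1⟩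
  · exact ⟨a', b', hadj, h1, h2⟩
  · exact ⟨a', b', hadj.symm, h1, h2⟩

lemma GC_adj_of {G : SimpleGraph V} {x y a' b' : V} (hadj : G.Adj a' b')
    (hne : hmap x y a' ≠ hmap x y b') : (GC G x y).Adj (hmap x y a') (hmap x y b') := by
  rw [GC, SimpleGraph.fromRel_adj]
  exact ⟨hne, Or.inl ⟨a', b', hadj, rfl, rfl⟩⟩

/-- projection of walks to the contraction. -/
lemma GC_proj {G : SimpleGraph V} {x y : V} :
    ∀ {a b : V} (w : G.Walk a b),
      ∃ w' : (GC G x y).Walk (hmap x y a) (hmap x y b),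
        ∀ v ∈ w'.support, ∃ u ∈ w.support, hmap x y u = v := by
  intro a b w
  induction w with
  | nil => exact ⟨SimpleGraph.Walk.nil, by simp +contextual⟩
  | @cons a c b hadj rest ih =>
    obtain ⟨w₂, hw₂⟩ := ih
    by_cases hac : hmap x y a = hmap x y c
    · refine ⟨w₂.copy hac.symm rfl, ?_⟩
      intro v hv
      rw [SimpleGraph.Walk.support_copy] at hv
      obtain ⟨u, hu, hu2⟩ := hw₂ v hv
      exact ⟨u, by simp [SimpleGraph.Walk.support_cons, List.mem_cons, hu], hu2⟩
    · refine ⟨SimpleGraph.Walk.cons (GC_adj_of hadj hac) w₂, ?_⟩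
      intro v hv
      rw [SimpleGraph.Walk.support_cons] at hv
      rcases List.mem_cons.1 hv with h | h
      · exact ⟨a, by simp [SimpleGraph.Walk.support_cons], h.symm⟩
      · obtain ⟨u, hu, hu2⟩ := hw₂ v h
        exact ⟨u, by simp [SimpleGraph.Walk.support_cons, List.mem_cons, hu], hu2⟩

/-- lifting of walks from the contraction, with prescribed initial vertex. -/
lemma GC_lift {G : SimpleGraph V} {x y : V} (hxy : G.Adj x y) :
    ∀ {a b : V} (w' : (GC G x y).Walk a b) (a₀ : V), hmap x y a₀ = a →
      ∃ (b₀ : V) (w : G.Walk a₀ b₀), hmap x y b₀ = b ∧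
        ∀ v ∈ w.support, hmap x y v ∈ w'.support := by
  intro a b w'
  induction w' with
  | nil =>
    intro a₀ ha₀
    exact ⟨a₀, SimpleGraph.Walk.nil, ha₀, by simp [ha₀]⟩
  | @cons a c b hadj rest ih =>
    intro a₀ ha₀
    obtain ⟨hne, a', c', hadj', ha', hc'⟩ := GC_adj hadj
    obtain ⟨b₀, w₂, hb₀, hw₂⟩ := ih c' hc'
    by_cases haa : a₀ = a'
    · subst haa
      refine ⟨b₀, SimpleGraph.Walk.cons hadj' w₂, hb₀, ?_⟩
      intro v hv
      rw [SimpleGraph.Walk.support_cons] at hv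
      rcases List.mem_cons.1 hv with h | h
      · subst h; simp [ha₀, SimpleGraph.Walk.support_cons]
      · simpa [SimpleGraph.Walk.support_cons] using Or.inr (hw₂ v h)
    · have hadj0 : G.Adj a₀ a' := adj_of_hmap_eq hxy (ha₀.trans ha'.symm) haa
      refine ⟨b₀, SimpleGraph.Walk.cons hadj0 (SimpleGraph.Walk.cons hadj' w₂), hb₀, ?_⟩
      intro v hv
      rw [SimpleGraph.Walk.support_cons, SimpleGraph.Walk.support_cons] at hv
      rcases List.mem_cons.1 hv with h | h
      · subst h; simp [ha₀, SimpleGraph.Walk.support_cons]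
      · rcases List.mem_cons.1 h with h' | h'
        · subst h'; simp [ha', SimpleGraph.Walk.support_cons]
        · simpa [SimpleGraph.Walk.support_cons] using Or.inr (hw₂ v h')

/-- the contraction has strictly fewer edges. -/
lemma GC_edges_lt [Fintype V] {G : SimpleGraph V} {x y : V} (hxy : G.Adj x y) :
    (GC G x y).edgeSet.ncard < G.edgeSet.ncard := by
  have hpre : ∀ ε' ∈ (GC G x y).edgeSet, ∃ ε ∈ G.edgeSet \ {s(x, y)}, Sym2.map (hmap x y) ε = ε' := by
    intro ε' hε'
    induction ε' with
    | _ a b =>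
      obtain ⟨hne, a', b', hadj, ha', hb'⟩ := GC_adj hε'
      refine ⟨s(a', b'), ?_, by simp [Sym2.map_pair_eq, ha', hb']⟩
      simp only [Set.mem_diff, Set.mem_singleton_iff, SimpleGraph.mem_edgeSet]
      refine ⟨hadj, ?_⟩
      intro hsy
      rw [Sym2.eq_iff] at hsy
      apply hne
      rcases hsy with ⟨rfl, rfl⟩ | ⟨rfl, rfl⟩
      · rw [← ha', ← hb']; simp [hmap, hxy.ne]
      · rw [← ha', ← hb']; simp [hmap, hxy.ne]
  classical
  choose! F hF1 hF2 using hpre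
  have hinj : Set.InjOn F (GC G x y).edgeSet := by
    intro e1 h1 e2 h2 heq
    rw [← hF2 e1 h1, ← hF2 e2 h2, heq]
  have hmaps : Set.MapsTo F (GC G x y).edgeSet (G.edgeSet \ {s(x, y)}) := fun e he => hF1 e he
  have hcard := Set.ncard_le_ncard_of_injOn F hmaps hinj (Set.toFinite _)
  have hlt : (G.edgeSet \ {s(x, y)}).ncard < G.edgeSet.ncard := by
    apply Set.ncard_diff_singleton_lt_of_mem (by exact hxy) (Set.toFinite _)
  omega

lemma DisjWalks.rev {G : SimpleGraph V} {A B : Finset V} {k : ℕ}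
    (h : DisjWalks G A B k) : DisjWalks G B A k := by
  obtain ⟨Q, hk, hends, hdisj⟩ := h
  refine ⟨Q.image (fun q => ⟨q.2.1, q.1, q.2.2.reverse⟩), ?_, ?_, ?_⟩
  · rw [Finset.card_image_of_injOn]
    · exact hk
    · intro q hq r hr heq
      by_contra hne
      have h1 : q.2.1 = r.2.1 := congrArg Sigma.fst heq
      exact hdisj q hq r hr hne q.2.1 (SimpleGraph.Walk.end_mem_support _)
        (by rw [h1]; exact SimpleGraph.Walk.end_mem_support r.2.2)
  · intro q hq
    obtain ⟨r, hr, rfl⟩ := Finset.mem_image.1 hq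
    exact ⟨(hends r hr).2, (hends r hr).1⟩
  · intro q hq r hr hne v hv hv'
    obtain ⟨q0, hq0, rfl⟩ := Finset.mem_image.1 hq
    obtain ⟨r0, hr0, rfl⟩ := Finset.mem_image.1 hr
    have hne0 : q0 ≠ r0 := fun h => hne (by rw [h])
    simp only [SimpleGraph.Walk.support_reverse, List.mem_reverse] at hv hv'
    exact hdisj q0 hq0 r0 hr0 hne0 v hv hv'

lemma normalizeFam {G'' : SimpleGraph V} {A X : Finset V} {k : ℕ} (hX : X.card = k)
    (h : DisjWalks G'' A X k) :
    ∃ Pf : V → Σ u v : V, G''.Walk u v,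
      (∀ x ∈ X, (Pf x).1 ∈ A ∧ (Pf x).2.1 = x ∧
        (∀ u ∈ (Pf x).2.2.support, u ∈ X → u = x) ∧ (Pf x).2.2.support.count x = 1) ∧
      (∀ x ∈ X, ∀ x' ∈ X, x ≠ x' → ∀ v ∈ (Pf x).2.2.support, v ∉ (Pf x').2.2.support) := by
  classical
  obtain ⟨Q, hk, hends, hdisj⟩ := h
  have hinj : Set.InjOn (fun q : Σ u v : V, G''.Walk u v => q.2.1) Q := by
    intro q hq r hr hqr
    by_contra hne
    refine hdisj q hq r hr hne q.2.1 (SimpleGraph.Walk.end_mem_support _) ?_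
    have : q.2.1 = r.2.1 := hqr
    rw [this]
    exact SimpleGraph.Walk.end_mem_support r.2.2
  have himgsub : Q.image (fun q => q.2.1) ⊆ X := by
    intro v hv; obtain ⟨q, hq, rfl⟩ := Finset.mem_image.1 hv; exact (hends q hq).2
  have hcardQ : X.card ≤ (Q.image (fun q => q.2.1)).card := by
    rw [Finset.card_image_of_injOn hinj]; omega
  have himg : Q.image (fun q => q.2.1) = X :=
    Finset.eq_of_subset_of_card_le himgsub hcardQ
  have hnorm : ∀ q : Σ u v : V, G''.Walk u v, ∃ s : Σ u v : V, G''.Walk u v,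
      q ∈ Q → (s.1 = q.1 ∧ s.2.1 ∈ X ∧
        (∀ u ∈ s.2.2.support, u ∈ X → u = s.2.1) ∧ s.2.2.support.count s.2.1 = 1 ∧
        (∀ u ∈ s.2.2.support, u ∈ q.2.2.support)) := by
    intro q
    by_cases hq : q ∈ Q
    · obtain ⟨v, w', h1, h2, h3, h4, _⟩ := exists_firstHit q.2.2
        ⟨q.2.1, (hends q hq).2, SimpleGraph.Walk.end_mem_support _⟩
      exact ⟨⟨q.1, v, w'⟩, fun _ => ⟨rfl, h1, h2, h3, h4⟩⟩
    · exact ⟨⟨q.1, q.1, SimpleGraph.Walk.nil⟩, fun h => absurd h hq⟩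
  choose sof hsof using hnorm
  have hqex : ∀ x : V, ∃ q : Σ u v : V, G''.Walk u v, x ∈ X → (q ∈ Q ∧ q.2.1 = x) := by
    intro x
    by_cases hx : x ∈ X
    · rw [← himg] at hx
      obtain ⟨q, hq, hqx⟩ := Finset.mem_image.1 hx
      exact ⟨q, fun _ => ⟨hq, hqx⟩⟩
    · exact ⟨⟨x, x, SimpleGraph.Walk.nil⟩, fun h => absurd h hx⟩
  choose qof hqof using hqex
  have hvinj : ∀ x ∈ X, ∀ x' ∈ X, (sof (qof x)).2.1 = (sof (qof x')).2.1 → x = x' := by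
    intro x hx x' hx' heq
    by_cases hqq : qof x = qof x'
    · rw [← (hqof x hx).2, ← (hqof x' hx').2, hqq]
    · exfalso
      have m1 : (sof (qof x)).2.1 ∈ (qof x).2.2.support :=
        (hsof (qof x) (hqof x hx).1).2.2.2.2 _ (SimpleGraph.Walk.end_mem_support _)
      have m2 : (sof (qof x)).2.1 ∈ (qof x').2.2.support := by
        rw [heq]
        exact (hsof (qof x') (hqof x' hx').1).2.2.2.2 _ (SimpleGraph.Walk.end_mem_support _)
      exact hdisj _ (hqof x hx).1 _ (hqof x' hx').1 hqq _ m1 m2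
  have himg2 : X.image (fun x => (sof (qof x)).2.1) = X := by
    apply Finset.eq_of_subset_of_card_le
    · intro v hv
      obtain ⟨q, hq, rfl⟩ := Finset.mem_image.1 hv
      exact (hsof (qof q) (hqof q hq).1).2.1
    · rw [Finset.card_image_of_injOn (fun a ha b hb => hvinj a ha b hb)]
  have hex2 : ∀ z : V, ∃ x : V, z ∈ X → (x ∈ X ∧ (sof (qof x)).2.1 = z) := by
    intro z
    by_cases hz : z ∈ X
    · conv at hz => rw [← himg2]
      obtain ⟨q, hq, hqz⟩ := Finset.mem_image.1 hz
      exact ⟨q, fun _ => ⟨hq, hqz⟩⟩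
    · exact ⟨z, fun h => absurd h hz⟩
  choose xof hxof using hex2
  refine ⟨fun z => sof (qof (xof z)), ?_, ?_⟩
  · intro z hz
    obtain ⟨hxz, hvz⟩ := hxof z hz
    obtain ⟨hqz, hqz2⟩ := hqof _ hxz
    obtain ⟨hs1, hs2, hs3, hs4, hs5⟩ := hsof _ hqz
    refine ⟨?_, hvz, ?_, ?_⟩
    · rw [hs1]; exact (hends _ hqz).1
    · intro u hu huX
      rw [← hvz]
      exact hs3 u hu huX
    · have key : ∀ L : List V, L.count (sof (qof (xof z))).2.1 = 1 → L.count z = 1 := by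
        intro L h
        rwa [hvz] at h
      exact key _ hs4
  · intro z hz z' hz' hne v hv hv'
    obtain ⟨hxz, hvz⟩ := hxof z hz
    obtain ⟨hxz', hvz'⟩ := hxof z' hz'
    have hxne : xof z ≠ xof z' := by
      intro h
      exact hne (by rw [← hvz, ← hvz', h])
    have hqne : qof (xof z) ≠ qof (xof z') := by
      intro h
      exact hxne (by rw [← (hqof _ hxz).2, ← (hqof _ hxz').2, h])
    exact hdisj _ (hqof _ hxz).1 _ (hqof _ hxz').1 hqne v
      ((hsof _ (hqof _ hxz).1).2.2.2.2 v hv) ((hsof _ (hqof _ hxz').1).2.2.2.2 v hv')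

lemma menger_glue {G G'' : SimpleGraph V} (hle : G'' ≤ G) {A B X : Finset V} {k : ℕ}
    (hSep : MSep G A B X) (hX : X.card = k)
    (hAX : DisjWalks G'' A X k) (hXB : DisjWalks G'' X B k) : DisjWalks G A B k := by
  obtain ⟨Pf, hPf, hPdisj⟩ := normalizeFam hX hAX
  obtain ⟨Qf, hQf, hQdisj⟩ := normalizeFam hX hXB.rev
  have hex : ∀ x : V, ∃ s : Σ u v : V, G.Walk u v, x ∈ X → (s.1 ∈ A ∧ s.2.1 ∈ B ∧
      (∀ v ∈ s.2.2.support, v ∈ (Pf x).2.2.support ∨ v ∈ (Qf x).2.2.support)) := by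
    intro x
    by_cases hx : x ∈ X
    · obtain ⟨hA1, hend1, _, _⟩ := hPf x hx
      obtain ⟨hB1, hend2, _, _⟩ := hQf x hx
      set w1 : G''.Walk (Pf x).1 x := (Pf x).2.2.copy rfl hend1 with hw1
      set w2 : G''.Walk x (Qf x).1 := ((Qf x).2.2.copy rfl hend2).reverse with hw2
      have hedges : ∀ e ∈ (w1.append w2).edges, e ∈ G.edgeSet := fun e he =>
        (SimpleGraph.edgeSet_mono hle) ((w1.append w2).edges_subset_edgeSet he)
      refine ⟨⟨(Pf x).1, (Qf x).1, (w1.append w2).transfer G hedges⟩,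
        fun _ => ⟨hA1, hB1, ?_⟩⟩
      intro v hv
      rw [SimpleGraph.Walk.support_transfer,
        SimpleGraph.Walk.mem_support_append_iff] at hv
      rcases hv with h | h
      · left
        have hs : w1.support = (Pf x).2.2.support := by
          rw [hw1, SimpleGraph.Walk.support_copy]
        rwa [hs] at h
      · right
        have hs : w2.support = (Qf x).2.2.support.reverse := by
          rw [hw2, SimpleGraph.Walk.support_reverse, SimpleGraph.Walk.support_copy]
        rw [hs, List.mem_reverse] at h
        exact h
    · exact ⟨⟨x, x, SimpleGraph.Walk.nil⟩, fun h => absurd h hx⟩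
  choose Sof hSof using hex
  have hcross : ∀ x ∈ X, ∀ x' ∈ X, x ≠ x' →
      ∀ v ∈ (Pf x).2.2.support, v ∉ (Qf x').2.2.support := by
    intro x hx x' hx' hne v hv hv'
    obtain ⟨hA1, hend1, honly1, hc1⟩ := hPf x hx
    obtain ⟨hB1, hend2, honly2, hc2⟩ := hQf x' hx'
    set P : G''.Walk (Pf x).1 x := (Pf x).2.2.copy rfl hend1 with hP
    set Q : G''.Walk x' (Qf x').1 := ((Qf x').2.2.copy rfl hend2).reverse with hQ
    have hPsupp : P.support = (Pf x).2.2.support := by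
      rw [hP, SimpleGraph.Walk.support_copy]
    have hQsupp : Q.support = (Qf x').2.2.support.reverse := by
      rw [hQ, SimpleGraph.Walk.support_reverse, SimpleGraph.Walk.support_copy]
    refine crux hle hSep hA1 hB1 hx hx' hne P Q ?_ ?_ ?_ ?_ v ?_ ?_
    · intro u hu huX
      rw [hPsupp] at hu
      exact honly1 u hu huX
    · rw [hPsupp]; exact hc1
    · intro u hu huX
      rw [hQsupp, List.mem_reverse] at hu
      exact honly2 u hu huX
    · rw [hQsupp, List.count_reverse]; exact hc2
    · rw [hPsupp]; exact hv
    · rw [hQsupp, List.mem_reverse]; exact hv'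
  have hdisjS : ∀ x ∈ X, ∀ x' ∈ X, x ≠ x' →
      ∀ v ∈ (Sof x).2.2.support, v ∉ (Sof x').2.2.support := by
    intro x hx x' hx' hne v hv hv'
    rcases (hSof x hx).2.2 v hv with h1 | h1 <;>
      rcases (hSof x' hx').2.2 v hv' with h2 | h2
    · exact hPdisj x hx x' hx' hne v h1 h2
    · exact hcross x hx x' hx' hne v h1 h2
    · exact hcross x' hx' x hx hne.symm v h2 h1
    · exact hQdisj x hx x' hx' hne v h1 h2
  refine ⟨X.image (fun x => Sof x), ?_, ?_, ?_⟩
  · rw [Finset.card_image_of_injOn]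
    · omega
    · intro x hx x' hx' heq
      by_contra hne
      refine hdisjS x hx x' hx' hne (Sof x).1 (SimpleGraph.Walk.start_mem_support _) ?_
      have heq' : Sof x = Sof x' := heq
      rw [← heq']
      exact SimpleGraph.Walk.start_mem_support _
  · intro q hq
    obtain ⟨x, hx, rfl⟩ := Finset.mem_image.1 hq
    exact ⟨(hSof x hx).1, (hSof x hx).2.1⟩
  · intro q hq r hr hne v hv hv'
    obtain ⟨x, hx, rfl⟩ := Finset.mem_image.1 hq
    obtain ⟨x', hx', rfl⟩ := Finset.mem_image.1 hr
    have hxne : x ≠ x' := fun h => hne (by rw [h])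
    exact hdisjS x hx x' hx' hxne v hv hv'

lemma lift_family {G : SimpleGraph V} {x y : V} (hxy : G.Adj x y) {A B : Finset V} {k : ℕ}
    (h : DisjWalks (GC G x y) (A.image (hmap x y)) (B.image (hmap x y)) k) :
    DisjWalks G A B k := by
  obtain ⟨Q', hk, hends, hdisj⟩ := h
  have hex : ∀ q' : Σ u v : V, (GC G x y).Walk u v, ∃ s : Σ u v : V, G.Walk u v,
      q' ∈ Q' → (s.1 ∈ A ∧ s.2.1 ∈ B ∧
        ∀ v ∈ s.2.2.support, hmap x y v ∈ q'.2.2.support) := by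
    intro q'
    by_cases hq : q' ∈ Q'
    · obtain ⟨a₀, ha₀A, ha₀⟩ := Finset.mem_image.1 (hends q' hq).1
      obtain ⟨b₀, w, hb₀, hsup⟩ := GC_lift hxy q'.2.2 a₀ ha₀
      by_cases hbB : b₀ ∈ B
      · exact ⟨⟨a₀, b₀, w⟩, fun _ => ⟨ha₀A, hbB, hsup⟩⟩
      · obtain ⟨b₁, hb₁B, hb₁⟩ := Finset.mem_image.1 (hends q' hq).2
        have hneb : b₀ ≠ b₁ := fun h => hbB (h ▸ hb₁B)
        have hadj : G.Adj b₀ b₁ := adj_of_hmap_eq hxy (hb₀.trans hb₁.symm) hneb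
        refine ⟨⟨a₀, b₁, w.concat hadj⟩, fun _ => ⟨ha₀A, hb₁B, ?_⟩⟩
        intro v hv
        rw [SimpleGraph.Walk.support_concat,
          List.mem_append] at hv
        rcases hv with h | h
        · exact hsup v h
        · have : v = b₁ := by simpa using h
          subst this
          rw [hb₁]
          exact SimpleGraph.Walk.end_mem_support _
    · exact ⟨⟨x, x, SimpleGraph.Walk.nil⟩, fun h => absurd h hq⟩
  choose Lof hLof using hex
  refine ⟨Q'.image (fun q => Lof q), ?_, ?_, ?_⟩
  · rw [Finset.card_image_of_injOn]
    · exact hk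
    · intro q hq r hr heq
      by_contra hne
      have h1 : hmap x y (Lof q).1 ∈ q.2.2.support :=
        (hLof q hq).2.2 _ (SimpleGraph.Walk.start_mem_support _)
      have h2 : hmap x y (Lof q).1 ∈ r.2.2.support := by
        have : (Lof q) = (Lof r) := heq
        rw [this]
        exact (hLof r hr).2.2 _ (SimpleGraph.Walk.start_mem_support _)
      exact hdisj q hq r hr hne _ h1 h2
  · intro q hq
    obtain ⟨q0, hq0, rfl⟩ := Finset.mem_image.1 hq
    exact ⟨(hLof q0 hq0).1, (hLof q0 hq0).2.1⟩
  · intro q hq r hr hne v hv hv'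
    obtain ⟨q0, hq0, rfl⟩ := Finset.mem_image.1 hq
    obtain ⟨r0, hr0, rfl⟩ := Finset.mem_image.1 hr
    have hne0 : q0 ≠ r0 := fun h => hne (by rw [h])
    exact hdisj q0 hq0 r0 hr0 hne0 (hmap x y v)
      ((hLof q0 hq0).2.2 v hv) ((hLof r0 hr0).2.2 v hv')

lemma menger_base [Fintype V] {G : SimpleGraph V} (hE : G.edgeSet = ∅) {A B : Finset V}
    {k : ℕ} (hsep : ∀ X, MSep G A B X → k ≤ X.card) : DisjWalks G A B k := by
  have hS : MSep G A B (A ∩ B) := by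
    intro a b w ha hb
    have hab := walk_eq_of_no_edges hE w
    exact ⟨a, Finset.mem_inter.2 ⟨ha, by rw [hab]; exact hb⟩, w.start_mem_support⟩
  refine ⟨(A ∩ B).image (fun v => ⟨v, v, SimpleGraph.Walk.nil⟩), ?_, ?_, ?_⟩
  · rw [Finset.card_image_of_injOn (fun a _ b _ heq => congrArg Sigma.fst heq)]
    exact hsep _ hS
  · intro q hq
    obtain ⟨v, hv, rfl⟩ := Finset.mem_image.1 hq
    exact ⟨(Finset.mem_inter.1 hv).1, (Finset.mem_inter.1 hv).2⟩
  · intro q hq r hr hne v hv hv'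
    obtain ⟨a, ha, rfl⟩ := Finset.mem_image.1 hq
    obtain ⟨b, hb, rfl⟩ := Finset.mem_image.1 hr
    simp only [SimpleGraph.Walk.support_nil, List.mem_singleton] at hv hv'
    have hab : a = b := by rw [← hv, hv']
    exact hne (by rw [hab])

theorem mengerAux [Fintype V] :
    ∀ (n : ℕ) (G : SimpleGraph V), G.edgeSet.ncard ≤ n →
      ∀ (A B : Finset V) (k : ℕ), (∀ X, MSep G A B X → k ≤ X.card) → DisjWalks G A B k := by
  intro n
  induction n with
  | zero =>
    intro G hG A B k hsep
    have hE : G.edgeSet = ∅ := by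
      by_contra h
      have := (Set.ncard_pos (Set.toFinite _)).2 (Set.nonempty_iff_ne_empty.2 h)
      omega
    exact menger_base hE hsep
  | succ n ih =>
    intro G hG A B k hsep
    by_cases hE : G.edgeSet = ∅
    · exact menger_base hE hsep
    · obtain ⟨e, he⟩ := Set.nonempty_iff_ne_empty.2 hE
      induction e using Sym2.ind with
      | _ x y =>
      rw [SimpleGraph.mem_edgeSet] at he
      have claim : ∀ X' : Finset V,
          MSep (GC G x y) (A.image (hmap x y)) (B.image (hmap x y)) X' →
          (MSep G A B (insert y X')) ∧ (x ∉ X' → MSep G A B X') := by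
        intro X' hX'
        have main : ∀ ⦃a b : V⦄ (w : G.Walk a b), a ∈ A → b ∈ B →
            ∃ z ∈ X', ∃ u ∈ w.support, hmap x y u = z := by
          intro a b w ha hb
          obtain ⟨w', hw'⟩ := GC_proj (x := x) (y := y) w
          obtain ⟨z, hzX', hzw'⟩ := hX' w' (Finset.mem_image_of_mem _ ha)
            (Finset.mem_image_of_mem _ hb)
          obtain ⟨u, hu, huz⟩ := hw' z hzw'
          exact ⟨z, hzX', u, hu, huz⟩
        constructor
        · intro a b w ha hb
          obtain ⟨z, hzX', u, hu, huz⟩ := main w ha hb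
          by_cases huy : u = y
          · exact ⟨y, Finset.mem_insert_self _ _, by rw [← huy]; exact hu⟩
          · have huz2 : u = z := by rw [← huz]; simp [hmap, huy]
            exact ⟨u, Finset.mem_insert_of_mem (by rw [huz2]; exact hzX'), hu⟩
        · intro hxX' a b w ha hb
          obtain ⟨z, hzX', u, hu, huz⟩ := main w ha hb
          by_cases huy : u = y
          · exfalso
            subst huy
            have hzx : z = x := by rw [← huz]; simp [hmap]
            exact hxX' (by rw [← hzx]; exact hzX')
          · have huz2 : u = z := by rw [← huz]; simp [hmap, huy]
            exact ⟨u, by rw [huz2]; exact hzX', hu⟩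
      by_cases hbig : ∀ X' : Finset V,
          MSep (GC G x y) (A.image (hmap x y)) (B.image (hmap x y)) X' → k ≤ X'.card
      · have hcount : (GC G x y).edgeSet.ncard ≤ n := by
          have := GC_edges_lt (G := G) he
          omega
        exact lift_family he (ih (GC G x y) hcount _ _ k hbig)
      · push_neg at hbig
        obtain ⟨X₀, hX₀sep, hX₀card⟩ := hbig
        have hxX₀ : x ∈ X₀ := by
          by_contra hx
          have := hsep X₀ ((claim X₀ hX₀sep).2 hx)
          omega
        have hXsep : MSep G A B (insert y X₀) := (claim X₀ hX₀sep).1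
        have hXcard : (insert y X₀).card = k := by
          have h1 : k ≤ (insert y X₀).card := hsep _ hXsep
          have h2 : (insert y X₀).card ≤ X₀.card + 1 := Finset.card_insert_le _ _
          omega
        set X := insert y X₀ with hXdef
        set G'' := G.deleteEdges {s(x, y)} with hG''
        have hle : G'' ≤ G := SimpleGraph.deleteEdges_le _
        have hEdel : G''.edgeSet = G.edgeSet \ {s(x, y)} :=
          SimpleGraph.edgeSet_deleteEdges _
        have hcount : G''.edgeSet.ncard ≤ n := by
          rw [hEdel]
          have := Set.ncard_diff_singleton_lt_of_mem
            (show s(x, y) ∈ G.edgeSet from he) (Set.toFinite _)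
          omega
        have hyX : y ∈ X := Finset.mem_insert_self _ _
        have hxX : x ∈ X := Finset.mem_insert_of_mem hxX₀
        have hsepAX : ∀ Z, MSep G'' A X Z → k ≤ Z.card := by
          intro Z hZ
          apply hsep
          intro a b w ha hb
          obtain ⟨v, w₁, hvX, honly, _, hsub, _⟩ :=
            exists_firstHit (X := X) w (hXsep w ha hb)
          have hw₁edges : ∀ e' ∈ w₁.edges, e' ∈ G''.edgeSet := by
            intro e' he'
            rw [hEdel]
            refine ⟨w₁.edges_subset_edgeSet he', ?_⟩
            intro hmem
            rw [Set.mem_singleton_iff] at hmem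
            subst hmem
            have hxs : x ∈ w₁.support := w₁.fst_mem_support_of_mem_edges he'
            have hys : y ∈ w₁.support := w₁.snd_mem_support_of_mem_edges he'
            exact he.ne ((honly x hxs hxX).trans (honly y hys hyX).symm)
          obtain ⟨z, hzZ, hzs⟩ := hZ (w₁.transfer G'' hw₁edges) ha hvX
          rw [SimpleGraph.Walk.support_transfer] at hzs
          exact ⟨z, hzZ, hsub z hzs⟩
        have hsepXB : ∀ Z, MSep G'' X B Z → k ≤ Z.card := by
          intro Z hZ
          apply hsep
          intro a b w ha hb
          obtain ⟨v, w₂, hvX, honly, _, hsub, _⟩ :=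
            exists_lastHit (X := X) w (hXsep w ha hb)
          have hw₂edges : ∀ e' ∈ w₂.edges, e' ∈ G''.edgeSet := by
            intro e' he'
            rw [hEdel]
            refine ⟨w₂.edges_subset_edgeSet he', ?_⟩
            intro hmem
            rw [Set.mem_singleton_iff] at hmem
            subst hmem
            have hxs : x ∈ w₂.support := w₂.fst_mem_support_of_mem_edges he'
            have hys : y ∈ w₂.support := w₂.snd_mem_support_of_mem_edges he'
            exact he.ne ((honly x hxs hxX).trans (honly y hys hyX).symm)
          obtain ⟨z, hzZ, hzs⟩ := hZ (w₂.transfer G'' hw₂edges) hvX hb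
          rw [SimpleGraph.Walk.support_transfer] at hzs
          exact ⟨z, hzZ, hsub z hzs⟩
        exact menger_glue hle hXsep hXcard
          (ih G'' hcount A X k hsepAX) (ih G'' hcount X B k hsepXB)

lemma disjPaths {G : SimpleGraph V} {A B : Finset V} {k : ℕ} (h : DisjWalks G A B k) :
    ∃ Q : Finset (Σ u v : V, G.Walk u v),
      k ≤ Q.card ∧ (∀ q ∈ Q, q.2.2.IsPath ∧ q.1 ∈ A ∧ q.2.1 ∈ B) ∧
      (∀ q ∈ Q, ∀ r ∈ Q, q ≠ r → ∀ x ∈ q.2.2.support, x ∉ r.2.2.support) := by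
  obtain ⟨Q, hk, hends, hdisj⟩ := h
  refine ⟨Q.image (fun q => ⟨q.1, q.2.1, q.2.2.bypass⟩), ?_, ?_, ?_⟩
  · rw [Finset.card_image_of_injOn]
    · exact hk
    · intro q hq r hr heq
      by_contra hne
      have heq' : (⟨q.1, q.2.1, q.2.2.bypass⟩ : Σ u v : V, G.Walk u v)
          = ⟨r.1, r.2.1, r.2.2.bypass⟩ := heq
      have h1 : q.1 = r.1 := by injection heq' with h1 h2
      refine hdisj q hq r hr hne q.1 (SimpleGraph.Walk.start_mem_support _) ?_
      rw [h1]
      exact SimpleGraph.Walk.start_mem_support _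
  · intro q hq
    obtain ⟨q0, hq0, rfl⟩ := Finset.mem_image.1 hq
    exact ⟨SimpleGraph.Walk.bypass_isPath _, (hends q0 hq0).1, (hends q0 hq0).2⟩
  · intro q hq r hr hne v hv hv'
    obtain ⟨q0, hq0, rfl⟩ := Finset.mem_image.1 hq
    obtain ⟨r0, hr0, rfl⟩ := Finset.mem_image.1 hr
    have hne0 : q0 ≠ r0 := fun h => hne (by rw [h])
    exact hdisj q0 hq0 r0 hr0 hne0 v (SimpleGraph.Walk.support_bypass_subset _ hv)
      (SimpleGraph.Walk.support_bypass_subset _ hv')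

lemma exists_edge_of_mem_support {G : SimpleGraph V} :
    ∀ {u v : V} (w : G.Walk u v), ¬ w.Nil → ∀ x ∈ w.support, ∃ e ∈ w.edges, x ∈ e := by
  intro u v w
  induction w with
  | nil => intro h; exact absurd SimpleGraph.Walk.nil_nil h
  | @cons a c b hadj rest ih =>
    intro _ x hx
    rw [SimpleGraph.Walk.support_cons] at hx
    rcases List.mem_cons.1 hx with h | h
    · exact ⟨s(a, c), by simp [SimpleGraph.Walk.edges_cons], by simp [h]⟩
    · cases rest with
      | nil =>
        have hxc : x = c := by simpa using h
        exact ⟨s(a, c), by simp [SimpleGraph.Walk.edges_cons], by simp [hxc]⟩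
      | cons hadj2 rest2 =>
        obtain ⟨e, he1, he2⟩ := ih SimpleGraph.Walk.not_nil_cons x h
        exact ⟨e, by rw [SimpleGraph.Walk.edges_cons]; exact List.mem_cons.2 (Or.inr he1), he2⟩

lemma sum_cover_bound {α β : Type} {s : Finset α} {t : Finset β}
    {g : β → Finset α} {f : α → ℝ} (hf : ∀ a ∈ s, 0 ≤ f a)
    (hsub : ∀ a ∈ s, ∃ b ∈ t, a ∈ g b) (hg : ∀ b ∈ t, g b ⊆ s) :
    ∑ a ∈ s, f a ≤ ∑ b ∈ t, ∑ a ∈ g b, f a := by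
  classical
  have hswap : ∀ b ∈ t, ∑ a ∈ g b, f a = ∑ a ∈ s, if a ∈ g b then f a else 0 := by
    intro b hb
    have hfe : g b = s.filter (· ∈ g b) := by
      ext a
      simp only [Finset.mem_filter]
      exact ⟨fun h => ⟨hg b hb h, h⟩, fun h => h.2⟩
    conv_lhs => rw [hfe]
    rw [Finset.sum_filter]
  calc ∑ a ∈ s, f a ≤ ∑ a ∈ s, ∑ b ∈ t, if a ∈ g b then f a else 0 := by
        apply Finset.sum_le_sum
        intro a ha
        obtain ⟨b₀, hb₀t, hb₀⟩ := hsub a ha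
        have h := Finset.single_le_sum (f := fun b => if a ∈ g b then f a else 0)
          (fun b _ => by show 0 ≤ (if a ∈ g b then f a else 0); split_ifs with hh; exacts [hf a ha, le_rfl]) hb₀t
        simpa [hb₀] using h
    _ = ∑ b ∈ t, ∑ a ∈ s, if a ∈ g b then f a else 0 := Finset.sum_comm
    _ = ∑ b ∈ t, ∑ a ∈ g b, f a := by
        exact Finset.sum_congr rfl fun b hb => (hswap b hb).symm

lemma flow_sep_bound [Fintype V] {G : SimpleGraph V} {d : ℕ} (hd : ∀ v, deg G v ≤ d)
    {S T : Finset V} (hdisj : Disjoint S T) {η : ℝ} (hη : 1 ≤ η)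
    {P : Finset (Σ u v : V, G.Walk u v)} {f : (Σ u v : V, G.Walk u v) → ℝ}
    (hf0 : ∀ p ∈ P, 0 ≤ f p) (hends : ∀ p ∈ P, p.1 ∈ S ∧ p.2.1 ∈ T)
    (hcong : ∀ e : Sym2 V, ∑ p ∈ P.filter (fun p => e ∈ p.2.2.edges), f p ≤ η)
    {X : Finset V} (hX : MSep G S T X) :
    ∑ p ∈ P, f p ≤ (X.card : ℝ) * ((d : ℝ) * η) := by
  have hη0 : (0 : ℝ) ≤ η := le_trans zero_le_one hη
  have hvert : ∀ x : V, ∑ p ∈ P.filter (fun p => x ∈ p.2.2.support), f p ≤ (d : ℝ) * η := by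
    intro x
    have hf0' : ∀ p ∈ P.filter (fun p => x ∈ p.2.2.support), 0 ≤ f p :=
      fun p hp => hf0 p (Finset.mem_filter.1 hp).1
    have hcover : ∀ p ∈ P.filter (fun p => x ∈ p.2.2.support),
        ∃ e ∈ (Finset.univ.filter (fun u => G.Adj x u)).image (fun u => s(x, u)),
          p ∈ P.filter (fun p => e ∈ p.2.2.edges ∧ x ∈ p.2.2.support) := by
      intro p hp
      obtain ⟨hpP, hpx⟩ := Finset.mem_filter.1 hp
      have hne : p.1 ≠ p.2.1 := by
        intro h
        exact (Finset.disjoint_left.1 hdisj) (hends p hpP).1 (h ▸ (hends p hpP).2)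
      obtain ⟨e, he1, he2⟩ := exists_edge_of_mem_support p.2.2
        (SimpleGraph.Walk.not_nil_of_ne hne) x hpx
      obtain ⟨u, rfl⟩ := Sym2.mem_iff_exists.1 he2
      have hadj : G.Adj x u := G.mem_edgeSet.1 (p.2.2.edges_subset_edgeSet he1)
      refine ⟨s(x, u), ?_, Finset.mem_filter.2 ⟨hpP, he1, hpx⟩⟩
      exact Finset.mem_image_of_mem _ (Finset.mem_filter.2 ⟨Finset.mem_univ u, hadj⟩)
    have hg : ∀ e ∈ (Finset.univ.filter (fun u => G.Adj x u)).image (fun u => s(x, u)),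
        P.filter (fun p => e ∈ p.2.2.edges ∧ x ∈ p.2.2.support)
          ⊆ P.filter (fun p => x ∈ p.2.2.support) := by
      intro e _ p hp
      exact Finset.mem_filter.2 ⟨(Finset.mem_filter.1 hp).1, (Finset.mem_filter.1 hp).2.2⟩
    have h1 := sum_cover_bound hf0' hcover hg
    have h2 : ∀ e : Sym2 V,
        ∑ p ∈ P.filter (fun p => e ∈ p.2.2.edges ∧ x ∈ p.2.2.support), f p ≤ η := by
      intro e
      refine le_trans (Finset.sum_le_sum_of_subset_of_nonneg (fun p hp => ?_)
        (fun p hp _ => hf0 p (Finset.mem_filter.1 hp).1)) (hcong e)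
      exact Finset.mem_filter.2 ⟨(Finset.mem_filter.1 hp).1, (Finset.mem_filter.1 hp).2.1⟩
    refine le_trans h1 (le_trans (Finset.sum_le_sum fun e _ => h2 e) ?_)
    rw [Finset.sum_const, nsmul_eq_mul]
    apply mul_le_mul_of_nonneg_right _ hη0
    exact Nat.cast_le.2 (le_trans Finset.card_image_le (by simpa [deg] using hd x))
  have hcover : ∀ p ∈ P, ∃ x ∈ X, p ∈ P.filter (fun p => x ∈ p.2.2.support) := by
    intro p hp
    obtain ⟨x, hxX, hxs⟩ := hX p.2.2 (hends p hp).1 (hends p hp).2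
    exact ⟨x, hxX, Finset.mem_filter.2 ⟨hp, hxs⟩⟩
  have h1 := sum_cover_bound hf0 hcover (fun x _ => Finset.filter_subset _ _)
  refine le_trans h1 (le_trans (Finset.sum_le_sum fun x _ => hvert x) ?_)
  rw [Finset.sum_const, nsmul_eq_mul]


end MengerProof

/-- If a graph of maximum degree `d` carries an `S`–`T` flow of value `κ`
with edge-congestion at most `η ≥ 1`, then it contains at least `⌈κ/(dη)⌉` vertex-disjoint
paths from `S` to `T`. -/
theorem stmt1 [Fintype V] (G : SimpleGraph V) (d : ℕ) (hd : ∀ v, deg G v ≤ d)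
    (S T : Finset V) (hdisj : Disjoint S T) (κ η : ℝ) (hη : 1 ≤ η)
    (P : Finset (Σ u v : V, G.Walk u v)) (f : (Σ u v : V, G.Walk u v) → ℝ)
    (hf0 : ∀ p ∈ P, 0 ≤ f p)
    (hends : ∀ p ∈ P, p.1 ∈ S ∧ p.2.1 ∈ T)
    (hval : ∑ p ∈ P, f p = κ)
    (hcong : ∀ e : Sym2 V, ∑ p ∈ P.filter (fun p => e ∈ p.2.2.edges), f p ≤ η) :
    ∃ Q : Finset (Σ u v : V, G.Walk u v),
      Nat.ceil (κ / (d * η)) ≤ Q.card ∧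
      (∀ q ∈ Q, q.2.2.IsPath ∧ q.1 ∈ S ∧ q.2.1 ∈ T) ∧
      (∀ q ∈ Q, ∀ r ∈ Q, q ≠ r → ∀ x ∈ q.2.2.support, x ∉ r.2.2.support) := by
  by_cases hk : Nat.ceil (κ / (d * η)) = 0
  · exact ⟨∅, by simp [hk], by simp, by simp⟩
  · have hd0 : d ≠ 0 := by
      rintro rfl
      simp at hk
    have hdη : (0 : ℝ) < (d : ℝ) * η := by
      have h1 : (0 : ℝ) < (d : ℝ) := by
        exact_mod_cast Nat.pos_of_ne_zero hd0
      linarith [lt_of_lt_of_le zero_lt_one hη, mul_pos h1 (lt_of_lt_of_le zero_lt_one hη)]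
    have hsep : ∀ X, MSep G S T X → Nat.ceil (κ / (d * η)) ≤ X.card := by
      intro X hX
      have hb := flow_sep_bound hd hdisj hη hf0 hends hcong hX
      rw [hval] at hb
      rw [Nat.ceil_le, div_le_iff₀ hdη]
      exact hb
    obtain ⟨Q, hQ1, hQ2, hQ3⟩ :=
      disjPaths (mengerAux G.edgeSet.ncard G le_rfl S T _ hsep)
    exact ⟨Q, hQ1, hQ2, hQ3⟩
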